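/- Let H and K be complex Hadamard matrices of order n with H ≠ K. Then the number of positions (i,j) at which H_{ij} ≠ K_{ij} is at least n. -/

import Mathlib

open Finset

private lemma had_col_orth {n : ℕ} (hn : 0 < n) (H : Matrix (Fin n) (Fin n) ℂ)
    (hH : H * H.conjTranspose = (n : ℂ) • 1) :
    H.conjTranspose * H = (n : ℂ) • 1 := by
  have hn' : (n : ℂ) ≠ 0 := Nat.cast_ne_zero.mpr hn.ne'
  have h1 : H * ((n : ℂ)⁻¹ • H.conjTranspose) = 1 := by
    rw [Matrix.mul_smul, hH, smul_smul, inv_mul_cancel₀ hn', one_smul]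
  have h2 := mul_eq_one_comm.mp h1
  calc H.conjTranspose * H
      = (n : ℂ) • (((n : ℂ)⁻¹ • H.conjTranspose) * H) := by
        rw [Matrix.smul_mul, smul_smul, mul_inv_cancel₀ hn', one_smul]
    _ = (n : ℂ) • 1 := by rw [h2]

private lemma had_key {n : ℕ} (hn : 0 < n) (H K : Matrix (Fin n) (Fin n) ℂ)
    (hHent : ∀ i j, ‖H i j‖ = 1)
    (hH : H * H.conjTranspose = (n : ℂ) • 1)
    (hK : K * K.conjTranspose = (n : ℂ) • 1)
    (r : Fin n) (hr : ∃ j, H r j ≠ K r j)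
    (R : Finset (Fin n)) (hR : ∀ i, i ∈ R ↔ ∃ j, H i j ≠ K i j)
    (C : Finset (Fin n)) (hC : ∀ j, j ∈ C ↔ H r j ≠ K r j) :
    n ≤ R.card * C.card := by
  classical
  set v : Fin n → ℂ := fun j => H r j - K r j with hv
  set y : Fin n → ℂ := fun t => ∑ j, v j * (starRingEnd ℂ) (H t j) with hy
  have hrR : r ∈ R := (hR r).mpr hr
  -- Step A : y vanishes off R
  have hy0 : ∀ t ∉ R, y t = 0 := by
    intro t ht
    have htK : ∀ j, H t j = K t j := by
      have := (hR t).not.mp ht; push_neg at this; exact this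
    have hrt : r ≠ t := fun h => ht (h ▸ hrR)
    have e1 : ∑ j, H r j * (starRingEnd ℂ) (H t j) = 0 := by
      have := congrArg (fun M => M r t) hH
      simpa [Matrix.mul_apply, Matrix.conjTranspose_apply, Matrix.one_apply, hrt] using this
    have e2 : ∑ j, K r j * (starRingEnd ℂ) (K t j) = 0 := by
      have := congrArg (fun M => M r t) hK
      simpa [Matrix.mul_apply, Matrix.conjTranspose_apply, Matrix.one_apply, hrt] using this
    have : y t = (∑ j, H r j * (starRingEnd ℂ) (H t j))
        - ∑ j, K r j * (starRingEnd ℂ) (K t j) := by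
      rw [hy]
      simp only [hv, sub_mul, Finset.sum_sub_distrib]
      congr 1
      refine Finset.sum_congr rfl fun j _ => ?_
      rw [htK j]
    rw [this, e1, e2, sub_zero]
  -- Step B : reconstruction of v from y
  have hH' := had_col_orth hn H hH
  have hB : ∀ j, ∑ t, y t * H t j = (n : ℂ) * v j := by
    intro j
    have : ∑ t, y t * H t j
        = ∑ k, v k * ∑ t, (starRingEnd ℂ) (H t k) * H t j := by
      simp only [hy, Finset.sum_mul]
      rw [Finset.sum_comm]
      exact Finset.sum_congr rfl fun k _ => by
        rw [Finset.mul_sum]; exact Finset.sum_congr rfl fun t _ => by ring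
    rw [this]
    have hcol : ∀ k, ∑ t, (starRingEnd ℂ) (H t k) * H t j
        = (n : ℂ) * (if k = j then 1 else 0) := by
      intro k
      have := congrArg (fun M => M k j) hH'
      simpa [Matrix.mul_apply, Matrix.conjTranspose_apply, Matrix.one_apply,
        Matrix.smul_apply, smul_eq_mul] using this
    simp only [hcol]
    rw [Finset.sum_eq_single j]
    · simp [mul_comm]
    · intro k _ hk; simp [hk]
    · intro h; exact absurd (Finset.mem_univ j) h
  -- Step C : norm of y
  have hCnorm : (∑ t, Complex.normSq (y t) : ℂ)
      = (n : ℂ) * ∑ j, Complex.normSq (v j) := by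
    push_cast
    calc (∑ t, (Complex.normSq (y t) : ℂ))
        = ∑ t, y t * (starRingEnd ℂ) (y t) := by
          exact Finset.sum_congr rfl fun t _ => (Complex.mul_conj (y t)).symm
      _ = ∑ t, ∑ j, (starRingEnd ℂ) (v j) * (y t * H t j) := by
          refine Finset.sum_congr rfl fun t _ => ?_
          rw [hy]
          simp only [map_sum, map_mul, Complex.conj_conj, Finset.mul_sum]
          exact Finset.sum_congr rfl fun j _ => by ring
      _ = ∑ j, (starRingEnd ℂ) (v j) * ∑ t, y t * H t j := by
          rw [Finset.sum_comm]
          exact Finset.sum_congr rfl fun j _ => (Finset.mul_sum _ _ _).symm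
      _ = ∑ j, (starRingEnd ℂ) (v j) * ((n : ℂ) * v j) := by
          exact Finset.sum_congr rfl fun j _ => by rw [hB j]
      _ = (n : ℂ) * ∑ j, (v j * (starRingEnd ℂ) (v j)) := by
          rw [Finset.mul_sum]; exact Finset.sum_congr rfl fun j _ => by ring
      _ = (n : ℂ) * ∑ j, (Complex.normSq (v j) : ℂ) := by
          rw [Finset.mul_sum, Finset.mul_sum]
          exact Finset.sum_congr rfl fun j _ => by rw [Complex.mul_conj]
  have hCnorm' : (∑ t, Complex.normSq (y t) : ℝ)
      = (n : ℝ) * ∑ j, Complex.normSq (v j) := by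
    have := hCnorm
    push_cast at this
    exact_mod_cast this
  set S : ℝ := ∑ j, Complex.normSq (v j) with hS
  set Y : ℝ := ∑ t, Complex.normSq (y t) with hY
  -- Step D : per-column bound
  have hD : ∀ j, Complex.normSq ((n : ℂ) * v j) ≤ (R.card : ℝ) * Y := by
    intro j
    have hrep : (n : ℂ) * v j = ∑ t ∈ R, y t * H t j := by
      rw [← hB j]
      exact (Finset.sum_subset (Finset.subset_univ R)
        (fun t _ ht => by rw [hy0 t ht, zero_mul])).symm
    have habs : ‖(n : ℂ) * v j‖ ≤ ∑ t ∈ R, ‖y t‖ := by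
      rw [hrep]
      refine (norm_sum_le _ _).trans ?_
      refine Finset.sum_le_sum fun t _ => ?_
      rw [norm_mul, hHent t j, mul_one]
    have hsq : Complex.normSq ((n : ℂ) * v j)
        ≤ (∑ t ∈ R, ‖y t‖) ^ 2 := by
      rw [← Complex.sq_norm]
      exact pow_le_pow_left₀ (norm_nonneg _) habs 2
    refine hsq.trans ?_
    refine (sq_sum_le_card_mul_sum_sq (s := R) (f := fun t => ‖y t‖)).trans ?_
    have : ∑ t ∈ R, ‖y t‖ ^ 2 ≤ Y := by
      rw [hY]
      refine Finset.sum_le_sum_of_subset_of_nonneg (Finset.subset_univ R)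
        (fun t _ _ => Complex.normSq_nonneg _) |>.trans_eq' ?_
      exact Finset.sum_congr rfl fun t _ => by rw [Complex.sq_norm]
    exact mul_le_mul_of_nonneg_left this (Nat.cast_nonneg _)
  -- Step E : combine
  have hv0 : ∀ j ∉ C, v j = 0 := by
    intro j hj
    have h := (hC j).not.mp hj
    push_neg at h
    simp [hv, h]
  have hE : (n : ℝ) ^ 2 * S ≤ (C.card : ℝ) * ((R.card : ℝ) * Y) := by
    have e1 : (n : ℝ) ^ 2 * S = ∑ j, Complex.normSq ((n : ℂ) * v j) := by
      rw [hS, Finset.mul_sum]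
      refine Finset.sum_congr rfl fun j _ => ?_
      rw [Complex.normSq_mul, Complex.normSq_natCast]; ring
    rw [e1]
    have e2 : ∑ j, Complex.normSq ((n : ℂ) * v j)
        = ∑ j ∈ C, Complex.normSq ((n : ℂ) * v j) := by
      refine (Finset.sum_subset (Finset.subset_univ C) fun j _ hj => ?_).symm
      rw [hv0 j hj, mul_zero, Complex.normSq_zero]
    rw [e2]
    calc ∑ j ∈ C, Complex.normSq ((n : ℂ) * v j)
        ≤ ∑ _j ∈ C, (R.card : ℝ) * Y := Finset.sum_le_sum fun j _ => hD j
      _ = (C.card : ℝ) * ((R.card : ℝ) * Y) := by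
          rw [Finset.sum_const, nsmul_eq_mul]
  -- positivity of S
  obtain ⟨j0, hj0⟩ := hr
  have hSpos : 0 < S := by
    have h1 : 0 < Complex.normSq (v j0) := by
      rw [Complex.normSq_pos]; simp [hv, sub_eq_zero, hj0]
    exact h1.trans_le (Finset.single_le_sum (fun j _ => Complex.normSq_nonneg _)
      (Finset.mem_univ j0))
  have hnpos : (0 : ℝ) < n := by exact_mod_cast hn
  have final : (n : ℝ) ≤ (R.card : ℝ) * (C.card : ℝ) := by
    have := hE
    rw [hCnorm'] at this
    -- this : n^2 * S ≤ C.card * (R.card * (n * S))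
    have hpos : (0 : ℝ) < (n : ℝ) * S := by positivity
    have h2 : (n : ℝ) * ((n : ℝ) * S) ≤ ((R.card : ℝ) * (C.card : ℝ)) * ((n : ℝ) * S) := by
      nlinarith [this]
    exact le_of_mul_le_mul_right h2 hpos
  exact_mod_cast final

/-- Any trade in a complex Hadamard matrix of order `n` has size at least `n`: two
distinct complex Hadamard matrices of order `n` differ in at least `n` positions. -/
theorem stmt_13 (n : ℕ) (H K : Matrix (Fin n) (Fin n) ℂ)
    (hHent : ∀ i j, ‖H i j‖ = 1)
    (hHHad : H * H.conjTranspose = (n : ℂ) • 1)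
    (hKent : ∀ i j, ‖K i j‖ = 1)
    (hKHad : K * K.conjTranspose = (n : ℂ) • 1)
    (hne : H ≠ K) :
    n ≤ Set.ncard {p : Fin n × Fin n | H p.1 p.2 ≠ K p.1 p.2} := by
  classical
  rcases Nat.eq_zero_or_pos n with rfl | hn
  · exact Nat.zero_le _
  set R : Finset (Fin n) := Finset.univ.filter (fun i => ∃ j, H i j ≠ K i j) with hRdef
  have hR : ∀ i, i ∈ R ↔ ∃ j, H i j ≠ K i j := by
    intro i; simp [hRdef]
  set c : Fin n → Finset (Fin n) := fun i => Finset.univ.filter (fun j => H i j ≠ K i j)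
    with hcdef
  have hc : ∀ i j, j ∈ c i ↔ H i j ≠ K i j := by intro i j; simp [hcdef]
  -- rewrite the ncard as a sum
  have hset : {p : Fin n × Fin n | H p.1 p.2 ≠ K p.1 p.2}
      = ↑(Finset.univ.filter (fun p : Fin n × Fin n => H p.1 p.2 ≠ K p.1 p.2)) := by
    ext p; simp
  rw [hset, Set.ncard_coe_finset]
  have hcard : (Finset.univ.filter (fun p : Fin n × Fin n => H p.1 p.2 ≠ K p.1 p.2)).card
      = ∑ i, (c i).card := by
    rw [Finset.card_filter, Fintype.sum_prod_type]
    exact Finset.sum_congr rfl fun i _ => by rw [hcdef, Finset.card_filter]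
  rw [hcard]
  -- R is nonempty
  have hRne : R.Nonempty := by
    obtain ⟨i, hi⟩ := Function.ne_iff.mp hne
    obtain ⟨j, hj⟩ := Function.ne_iff.mp hi
    exact ⟨i, (hR i).mpr ⟨j, hj⟩⟩
  have hdpos : 0 < R.card := Finset.card_pos.mpr hRne
  -- key bound rowwise
  have hkey : ∀ i ∈ R, n ≤ R.card * (c i).card := by
    intro i hi
    exact had_key hn H K hHent hHHad hKHad i ((hR i).mp hi) R hR (c i) (hc i)
  have hmul : R.card * n ≤ R.card * ∑ i, (c i).card := by
    calc R.card * n = ∑ _i ∈ R, n := by rw [Finset.sum_const, smul_eq_mul]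
      _ ≤ ∑ i ∈ R, R.card * (c i).card := Finset.sum_le_sum hkey
      _ = R.card * ∑ i ∈ R, (c i).card := (Finset.mul_sum _ _ _).symm
      _ ≤ R.card * ∑ i, (c i).card := by
          exact Nat.mul_le_mul_left _ (Finset.sum_le_sum_of_subset (Finset.subset_univ R))
  exact Nat.le_of_mul_le_mul_left hmul hdpos
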